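/- arXiv:2108.10287 — 2 statements merged into one kernel-verified Lean document; each statement's English description precedes it below -/
import Mathlib

section
/- Let 𝔻 be the unit disk, n ≥ 0 an integer, and for φ ∈ L^p(𝔻) with 2 < p < ∞ define P_n φ(z) = −(1/π) ∬_𝔻 [φ(ζ)/(ζ−z) + z^{2n+1} φ(ζ)̄/(1−ζ̄z)] dA(ζ). Then Re[z^{−n} P_n φ(z)] = 0 for all z on the unit circle. -/
open Filter Topology Set MeasureTheory

lemma cross_conj (z ζ a : ℂ) (hz : (starRingEnd ℂ) z * z = 1) (n : ℕ) :
    (starRingEnd ℂ) ((z ^ n)⁻¹ * (a / (ζ - z)))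
      = -((z ^ n)⁻¹ * (z ^ (2 * n + 1) * (starRingEnd ℂ) a / (1 - (starRingEnd ℂ) ζ * z))) := by
  have hz0 : z ≠ 0 := by intro h; rw [h] at hz; simp at hz
  have hzinv : ((starRingEnd ℂ) z)⁻¹ = z := inv_eq_of_mul_eq_one_right hz
  have hd : 1 - (starRingEnd ℂ) ζ * z = -z * ((starRingEnd ℂ) ζ - (starRingEnd ℂ) z) := by
    linear_combination -hz
  rw [hd, map_mul, map_inv₀, map_pow, map_div₀, map_sub, ← inv_pow, hzinv]
  by_cases hw : (starRingEnd ℂ) ζ - (starRingEnd ℂ) z = 0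
  · rw [hw]; simp
  · field_simp
    ring

/-- For `φ ∈ L^p(𝔻)`, `2 < p < ∞`, the modified Cauchy-Green operator
`P_n φ(z) = -(1/π) ∬_𝔻 [φ(ζ)/(ζ-z) + z^{2n+1} conj(φ(ζ))/(1-conj(ζ)z)] dA(ζ)`
satisfies the Riemann–Hilbert boundary condition `Re[z^{-n} P_n φ(z)] = 0` on `|z| = 1`. -/
theorem Pn_boundary_condition
    (n : ℕ) (p : ℝ) (hp : 2 < p) (φ : ℂ → ℂ)
    (hφ : MemLp φ (ENNReal.ofReal p) (volume.restrict (Metric.ball (0:ℂ) 1))) :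
    ∀ z : ℂ, ‖z‖ = 1 →
      ((z ^ n)⁻¹ *
        (-(1 / (Real.pi : ℂ)) * ∫ ζ in Metric.ball (0:ℂ) 1,
          (φ ζ / (ζ - z)
            + z ^ (2 * n + 1) * (starRingEnd ℂ) (φ ζ) / (1 - (starRingEnd ℂ) ζ * z)))).re
      = 0 := by
  intro z hz1
  have hz : (starRingEnd ℂ) z * z = 1 := by
    rw [mul_comm, Complex.mul_conj]
    norm_cast
    rw [Complex.normSq_eq_norm_sq, hz1, one_pow]
  set c : ℂ := -(1 / (Real.pi : ℂ)) with hc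
  have hcc : (starRingEnd ℂ) c = c := by
    simp [hc, map_neg, map_div₀, Complex.conj_ofReal]
  set J : ℂ := (z ^ n)⁻¹ *
      (c * ∫ ζ in Metric.ball (0:ℂ) 1,
        (φ ζ / (ζ - z)
          + z ^ (2 * n + 1) * (starRingEnd ℂ) (φ ζ) / (1 - (starRingEnd ℂ) ζ * z))) with hJ
  have hJ' : J = ∫ ζ in Metric.ball (0:ℂ) 1,
      (z ^ n)⁻¹ * (c * (φ ζ / (ζ - z)
        + z ^ (2 * n + 1) * (starRingEnd ℂ) (φ ζ) / (1 - (starRingEnd ℂ) ζ * z))) := by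
    rw [hJ, ← MeasureTheory.integral_const_mul, ← MeasureTheory.integral_const_mul]
  have hconjJ : (starRingEnd ℂ) J = -J := by
    rw [hJ', ← integral_conj, ← integral_neg]
    refine integral_congr_ae (Filter.Eventually.of_forall fun ζ => ?_)
    have h1 := cross_conj z ζ (φ ζ) hz n
    have h2 : (starRingEnd ℂ) ((z ^ n)⁻¹ *
        (z ^ (2 * n + 1) * (starRingEnd ℂ) (φ ζ) / (1 - (starRingEnd ℂ) ζ * z)))
        = -((z ^ n)⁻¹ * (φ ζ / (ζ - z))) := by
      have hB : (z ^ n)⁻¹ * (z ^ (2 * n + 1) * (starRingEnd ℂ) (φ ζ)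
          / (1 - (starRingEnd ℂ) ζ * z))
          = -((starRingEnd ℂ) ((z ^ n)⁻¹ * (φ ζ / (ζ - z)))) := by
        rw [h1, neg_neg]
      rw [hB, map_neg, Complex.conj_conj]
    have expand : (z ^ n)⁻¹ * (c * (φ ζ / (ζ - z)
        + z ^ (2 * n + 1) * (starRingEnd ℂ) (φ ζ) / (1 - (starRingEnd ℂ) ζ * z)))
        = c * ((z ^ n)⁻¹ * (φ ζ / (ζ - z))
          + (z ^ n)⁻¹ * (z ^ (2 * n + 1) * (starRingEnd ℂ) (φ ζ)
            / (1 - (starRingEnd ℂ) ζ * z))) := by ring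
    show _ = _
    beta_reduce
    rw [expand, map_mul, map_add, hcc, h1, h2]
    ring
  have := congrArg Complex.re hconjJ
  rw [Complex.conj_re, Complex.neg_re] at this
  show J.re = 0
  linarith
end

section
/- Let w be holomorphic in the unit disk 𝔻, continuous up to the boundary circle S¹, and suppose Re(z^{−n} w(z)) = γ(z) on S¹, where n > 0 is an integer and γ ∈ C^β(S¹) for some 0 < β < 1. Then w(z) = z^n · 𝒮γ(z) + Σ_{k=0}^{2n} c_k z^k on 𝔻, where 𝒮γ(z) = (1/(2πi)) ∫_{S¹} γ(t)·(t+z)/(t−z)·dt/t is the Schwarz integral and c₀, …, c_{2n} are complex constants. -/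
open Filter Topology Set MeasureTheory Metric

open Complex in
open scoped Real in
lemma rh_circleIntegral_add' {f g : ℂ → ℂ} (hf : CircleIntegrable f 0 1)
    (hg : CircleIntegrable g 0 1) :
    (∮ t in C(0,1), (f t + g t)) = (∮ t in C(0,1), f t) + ∮ t in C(0,1), g t := by
  simp only [circleIntegral, smul_add, intervalIntegral.integral_add hf.out hg.out]

open Complex in
open scoped Real in
lemma rh_circleIntegral_fsum {ι : Type*} (s : Finset ι) (f : ι → ℂ → ℂ)
    (h : ∀ i ∈ s, CircleIntegrable (f i) 0 1) :
    (∮ t in C(0,1), (∑ i ∈ s, f i t)) = ∑ i ∈ s, ∮ t in C(0,1), f i t := by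
  simp only [circleIntegral, Finset.smul_sum]
  exact intervalIntegral.integral_finset_sum fun i hi => (h i hi).out



open Complex in
open scoped Real in
lemma intervalIntegral_conj {f : ℝ → ℂ} {a b : ℝ} :
    (∫ x in a..b, (starRingEnd ℂ) (f x)) = (starRingEnd ℂ) (∫ x in a..b, f x) := by
  simp [intervalIntegral, integral_conj, map_sub]

open Complex in
open scoped Real in
lemma circleIntegral_conj (f : ℂ → ℂ) :
    (starRingEnd ℂ) (∮ t in C(0,1), f t) =
      -∮ t in C(0,1), (starRingEnd ℂ) (f t) * t ^ (-2 : ℤ) := by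
  have : (∮ t in C(0,1), (starRingEnd ℂ) (f t) * t ^ (-2 : ℤ)) =
      -(starRingEnd ℂ) (∮ t in C(0,1), f t) := by
    rw [circleIntegral, circleIntegral, ← intervalIntegral_conj, ← intervalIntegral.integral_neg]
    refine intervalIntegral.integral_congr fun θ _ => ?_
    have h0 : circleMap 0 1 θ ≠ 0 := circleMap_ne_center one_ne_zero
    have hc : (starRingEnd ℂ) (circleMap 0 1 θ) = (circleMap 0 1 θ)⁻¹ := by
      simp [circleMap, ← Complex.exp_conj, ← Complex.exp_neg]
    have h2 : circleMap 0 1 θ ^ 2 ≠ 0 := pow_ne_zero _ h0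
    simp only [deriv_circleMap, smul_eq_mul, map_mul, Complex.conj_I, hc]
    rw [zpow_neg, zpow_two]
    field_simp
  rw [this, neg_neg]

open Complex in
open scoped Real in
lemma conj_sphere {t : ℂ} (ht : ‖t‖ = 1) : (starRingEnd ℂ) t = t⁻¹ := by
  have h0 : t ≠ 0 := fun h => by simp [h] at ht
  field_simp
  rw [mul_comm, Complex.mul_conj, Complex.normSq_eq_norm_sq, ht]
  norm_num

open Complex in
open scoped Real in
lemma cauchy' (w : ℂ → ℂ) (hw : DifferentiableOn ℂ w (ball 0 1))
    (hwc : ContinuousOn w (closedBall 0 1)) {z : ℂ} (hz : z ∈ ball (0:ℂ) 1) :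
    (∮ t in C(0,1), (t - z)⁻¹ * w t) = (2 * (π:ℂ) * I) * w z := by
  have := Complex.circleIntegral_sub_inv_smul_of_differentiable_on_off_countable
    (countable_empty) hz hwc (fun x hx => hw.differentiableAt (isOpen_ball.mem_nhds hx.1))
  simpa [smul_eq_mul] using this

open Complex in
open scoped Real in
lemma conj_pow_integral (w : ℂ → ℂ) (p : ℕ) :
    (∮ t in C(0,1), (starRingEnd ℂ) (w t) * t ^ p) =
      (starRingEnd ℂ) (-∮ t in C(0,1), w t * t ^ (-(p:ℤ) - 2)) := by
  have h1 : (starRingEnd ℂ) (∮ t in C(0,1), (starRingEnd ℂ) (w t) * t ^ p)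
      = -∮ t in C(0,1), (starRingEnd ℂ) ((starRingEnd ℂ) (w t) * t ^ p) * t ^ (-2:ℤ) :=
    circleIntegral_conj _
  have h2 : (∮ t in C(0,1), (starRingEnd ℂ) ((starRingEnd ℂ) (w t) * t ^ p) * t ^ (-2:ℤ))
      = ∮ t in C(0,1), w t * t ^ (-(p:ℤ) - 2) := by
    refine circleIntegral.integral_congr zero_le_one fun t ht => ?_
    have htn : ‖t‖ = 1 := by simpa using ht
    have h0 : t ≠ 0 := fun h => by simp [h] at htn
    rw [map_mul, Complex.conj_conj, map_pow, conj_sphere htn, inv_pow, ← zpow_natCast t p,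
      ← zpow_neg, mul_assoc, ← zpow_add₀ h0]
    ring_nf
  calc (∮ t in C(0,1), (starRingEnd ℂ) (w t) * t ^ p)
      = (starRingEnd ℂ) ((starRingEnd ℂ) (∮ t in C(0,1), (starRingEnd ℂ) (w t) * t ^ p)) :=
        (Complex.conj_conj _).symm
    _ = (starRingEnd ℂ) (-∮ t in C(0,1), w t * t ^ (-(p:ℤ) - 2)) := by rw [h1, map_neg, h2, map_neg]

open Complex in
open scoped Real in
lemma conj_cauchy (w : ℂ → ℂ) (hw : DifferentiableOn ℂ w (ball 0 1))
    (hwc : ContinuousOn w (closedBall 0 1)) {z : ℂ} (hz : z ∈ ball (0:ℂ) 1) :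
    (∮ t in C(0,1), (starRingEnd ℂ) (w t) * (t - z)⁻¹)
      = (2 * (π:ℂ) * I) * (starRingEnd ℂ) (w 0) := by
  have hzn : ‖z‖ < 1 := by simpa using hz
  set g : ℂ → ℂ := fun t => w t * (1 - (starRingEnd ℂ) z * t)⁻¹ with hgdef
  have hne : ∀ t : ℂ, ‖t‖ ≤ 1 → 1 - (starRingEnd ℂ) z * t ≠ 0 := by
    intro t htle h
    have h1 : (1:ℂ) = (starRingEnd ℂ) z * t := sub_eq_zero.1 h
    have h2 : (1:ℝ) = ‖z‖ * ‖t‖ := by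
      calc (1:ℝ) = ‖(1:ℂ)‖ := by simp
        _ = ‖(starRingEnd ℂ) z * t‖ := by rw [← h1]
        _ = ‖z‖ * ‖t‖ := by rw [norm_mul, RCLike.norm_conj]
    nlinarith [norm_nonneg t, norm_nonneg z]
  have hgc : ContinuousOn g (closedBall 0 1) := by
    refine hwc.mul (ContinuousOn.inv₀ (Continuous.continuousOn (by continuity)) ?_)
    exact fun t ht => hne t (by simpa [mem_closedBall_zero_iff] using ht)
  have hgd : DifferentiableOn ℂ g (ball 0 1) := by
    refine hw.mul (DifferentiableOn.inv ?_ ?_)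
    · exact (differentiableOn_const _).sub ((differentiableOn_const _).mul differentiableOn_id)
    · exact fun t ht => hne t (le_of_lt (by simpa [mem_ball_zero_iff] using ht))
  have hcau := cauchy' g hgd hgc (mem_ball_self one_pos)
  have h1 := circleIntegral_conj (fun t => (starRingEnd ℂ) (w t) * (t - z)⁻¹)
  have h2 : (∮ t in C(0,1), (starRingEnd ℂ) ((starRingEnd ℂ) (w t) * (t - z)⁻¹) * t ^ (-2:ℤ))
      = ∮ t in C(0,1), (t - 0)⁻¹ * g t := by
    refine circleIntegral.integral_congr zero_le_one fun t ht => ?_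
    have htn : ‖t‖ = 1 := by simpa using ht
    have h0 : t ≠ 0 := fun h => by simp [h] at htn
    have hden := hne t (le_of_eq htn)
    have hu : t * t⁻¹ = 1 := mul_inv_cancel₀ h0
    have key : (t⁻¹ - (starRingEnd ℂ) z)⁻¹ = t * (1 - (starRingEnd ℂ) z * t)⁻¹ := by
      have e : t⁻¹ - (starRingEnd ℂ) z = (1 - (starRingEnd ℂ) z * t) * t⁻¹ := by
        rw [sub_mul, one_mul, mul_inv_cancel_right₀ h0]
      rw [e, mul_inv, inv_inv, mul_comm]
    rw [map_mul, Complex.conj_conj, map_inv₀, map_sub, conj_sphere htn, sub_zero,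
      zpow_neg, zpow_two, key, hgdef, mul_inv]
    linear_combination (w t * (1 - (starRingEnd ℂ) z * t)⁻¹ * t⁻¹) * hu
  have hg0 : g 0 = w 0 := by simp [hgdef]
  calc (∮ t in C(0,1), (starRingEnd ℂ) (w t) * (t - z)⁻¹)
      = (starRingEnd ℂ) ((starRingEnd ℂ)
          (∮ t in C(0,1), (starRingEnd ℂ) (w t) * (t - z)⁻¹)) := (Complex.conj_conj _).symm
    _ = (starRingEnd ℂ) (-((2 * (π:ℂ) * I) * w 0)) := by rw [h1, h2, hcau, hg0]
    _ = (2 * (π:ℂ) * I) * (starRingEnd ℂ) (w 0) := by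
        simp only [map_neg, map_mul, Complex.conj_I, Complex.conj_ofReal, map_ofNat]
        ring


open Complex in
open scoped Real in
lemma sum_c_eq (n : ℕ) (A B : ℕ → ℂ) (G : ℂ) (z : ℂ) :
    ∑ k : Fin (2*n+1), ((if (k:ℕ) < n then A k else 0) + (if (k:ℕ) = n then G else 0)
        + (if n ≤ (k:ℕ) then -(B (2*n - k)) else 0)) * z ^ (k:ℕ)
      = (∑ j ∈ Finset.range n, z^(n-1-j) * A (n-1-j)) + z^n * G
        - (∑ j ∈ Finset.range n, z^(n+j) * B (n-j)) - z^(2*n) * B 0 := by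
  rw [Fin.sum_univ_eq_sum_range
    (fun k => ((if k < n then A k else 0) + (if k = n then G else 0)
        + (if n ≤ k then -(B (2*n - k)) else 0)) * z ^ k)]
  simp only [add_mul, Finset.sum_add_distrib, ite_mul, zero_mul, neg_mul]
  have h1 : (∑ k ∈ Finset.range (2*n+1), if k < n then A k * z ^ k else 0)
      = ∑ j ∈ Finset.range n, z^(n-1-j) * A (n-1-j) := by
    rw [Finset.sum_range_reflect (fun j => z ^ j * A j) n]
    rw [← Finset.sum_subset (Finset.range_subset_range.2 (by omega : n ≤ 2*n+1))]
    · exact Finset.sum_congr rfl fun k hk => by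
        rw [if_pos (Finset.mem_range.1 hk), mul_comm]
    · intro k _ hk
      rw [if_neg (by simpa using hk)]
  have h2 : (∑ k ∈ Finset.range (2*n+1), if k = n then G * z ^ k else 0) = z^n * G := by
    rw [Finset.sum_ite_eq' (Finset.range (2*n+1)) n (fun k => G * z ^ k),
      if_pos (Finset.mem_range.2 (by omega)), mul_comm]
  have h3 : (∑ k ∈ Finset.range (2*n+1), if n ≤ k then -(B (2*n-k) * z ^ k) else 0)
      = -((∑ j ∈ Finset.range n, z^(n+j) * B (n-j)) + z^(2*n) * B 0) := by
    have e1 : (∑ k ∈ Finset.Ico 0 n, if n ≤ k then -(B (2*n-k) * z ^ k) else 0) = 0 := by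
      refine Finset.sum_eq_zero fun k hk => ?_
      simp only [Finset.mem_Ico] at hk
      rw [if_neg (by omega)]
    calc (∑ k ∈ Finset.range (2*n+1), if n ≤ k then -(B (2*n-k) * z ^ k) else 0)
        = ∑ k ∈ Finset.Ico 0 (2*n+1), if n ≤ k then -(B (2*n-k) * z ^ k) else 0 := by
          rw [Finset.range_eq_Ico]
      _ = (∑ k ∈ Finset.Ico 0 n, if n ≤ k then -(B (2*n-k) * z ^ k) else 0)
          + ∑ k ∈ Finset.Ico n (2*n+1), if n ≤ k then -(B (2*n-k) * z ^ k) else 0 :=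
          (Finset.sum_Ico_consecutive _ (Nat.zero_le n) (by omega)).symm
      _ = ∑ k ∈ Finset.range (2*n+1-n), if n ≤ n+k then -(B (2*n-(n+k)) * z ^ (n+k)) else 0 := by
          rw [e1, zero_add, Finset.sum_Ico_eq_sum_range]
      _ = ∑ j ∈ Finset.range (n+1), -(z^(n+j) * B (n-j)) := by
          rw [show 2*n+1-n = n+1 by omega]
          refine Finset.sum_congr rfl fun j hj => ?_
          simp only [Finset.mem_range] at hj
          rw [if_pos (by omega), show 2*n-(n+j) = n - j by omega, mul_comm]
      _ = -((∑ j ∈ Finset.range n, z^(n+j) * B (n-j)) + z^(2*n) * B 0) := by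
          rw [Finset.sum_neg_distrib, Finset.sum_range_succ,
            show n - n = 0 by omega, show n + n = 2*n by omega]
  rw [h1, h2, h3]; ring


open Complex in
open scoped Real in
lemma pointwise_decomp (n : ℕ) (z t wt : ℂ) (g : ℝ) (ht : ‖t‖ = 1) (hz : ‖z‖ < 1)
    (hg : (g:ℂ) = ((t^n)⁻¹ * wt + (starRingEnd ℂ) ((t^n)⁻¹ * wt)) / 2)
    (htc : (starRingEnd ℂ) t = t⁻¹) :
    z^n * ((g:ℂ) * ((t + z)/(t - z)) / t) =
      (t - z)⁻¹ * wt
      + (∑ j ∈ Finset.range n, -(z^(n-1-j) * (wt * t^((j:ℤ) - n))))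
      + (∑ j ∈ Finset.range n, z^(n+j) * ((starRingEnd ℂ) wt * t^(n-1-j)))
      + z^(2*n) * ((starRingEnd ℂ) wt * (t - z)⁻¹)
      + -(z^n * ((g:ℂ) * t⁻¹)) := by
  have ht0 : t ≠ 0 := fun h => by simp [h] at ht
  have htn : t^n ≠ 0 := pow_ne_zero _ ht0
  have htz : t - z ≠ 0 := sub_ne_zero.2 fun h => by rw [h] at ht; exact absurd ht (by linarith)
  have hQ : (∑ j ∈ Finset.range n, t ^ j * z ^ (n - 1 - j)) * (t - z) = t^n - z^n :=
    geom_sum₂_mul t z n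
  have hQ' : (∑ j ∈ Finset.range n, z ^ j * t ^ (n - 1 - j))
      = ∑ j ∈ Finset.range n, t ^ j * z ^ (n - 1 - j) := by
    apply mul_right_cancel₀ htz
    rw [hQ]
    calc (∑ j ∈ Finset.range n, z ^ j * t ^ (n - 1 - j)) * (t - z)
        = -((∑ j ∈ Finset.range n, z ^ j * t ^ (n - 1 - j)) * (z - t)) := by ring
      _ = t^n - z^n := by rw [geom_sum₂_mul z t n]; ring
  set Q := ∑ j ∈ Finset.range n, t ^ j * z ^ (n - 1 - j) with hQdef
  have hS1 : (∑ j ∈ Finset.range n, -(z^(n-1-j) * (wt * t^((j:ℤ) - n))))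
      = -(wt * (t^n)⁻¹ * Q) := by
    calc (∑ j ∈ Finset.range n, -(z^(n-1-j) * (wt * t^((j:ℤ) - n))))
        = ∑ j ∈ Finset.range n, -(wt * (t^n)⁻¹ * (t^j * z^(n-1-j))) :=
          Finset.sum_congr rfl fun j _ => by
            rw [zpow_sub₀ ht0, zpow_natCast, zpow_natCast]
            field_simp
      _ = -(wt * (t^n)⁻¹ * Q) := by
          rw [Finset.sum_neg_distrib, ← Finset.mul_sum, hQdef]
  have hS2 : (∑ j ∈ Finset.range n, z^(n+j) * ((starRingEnd ℂ) wt * t^(n-1-j)))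
      = z^n * (starRingEnd ℂ) wt * Q := by
    calc (∑ j ∈ Finset.range n, z^(n+j) * ((starRingEnd ℂ) wt * t^(n-1-j)))
        = ∑ j ∈ Finset.range n, (z^n * (starRingEnd ℂ) wt) * (z^j * t^(n-1-j)) :=
          Finset.sum_congr rfl fun j _ => by rw [pow_add]; ring
      _ = z^n * (starRingEnd ℂ) wt * ∑ j ∈ Finset.range n, z^j * t^(n-1-j) := by
          rw [← Finset.mul_sum]
      _ = z^n * (starRingEnd ℂ) wt * Q := by rw [hQ']
  rw [hS1, hS2, hg]
  simp only [map_mul, map_inv₀, map_pow, htc, inv_inv, inv_pow]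
  have hQ2 : Q = (t^n - z^n) / (t - z) := by rw [← hQ]; field_simp
  rw [hQ2]
  field_simp
  ring


/-- Riemann–Hilbert problem of positive index on the disk: if `w` is holomorphic on `𝔻`,
continuous on `𝔻̄`, and `Re(z^{-n} w(z)) = γ(z)` on `S¹` with `n > 0` and `γ ∈ C^β(S¹)`,
then `w(z) = zⁿ 𝒮γ(z) + Σ_{k=0}^{2n} c_k z^k`, where `𝒮γ` is the Schwarz integral. -/
theorem riemann_hilbert_representation
    (n : ℕ) (hn : 0 < n) (β : ℝ) (hβ : 0 < β) (hβ1 : β < 1)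
    (w : ℂ → ℂ) (γ : ℂ → ℝ) (H : ℝ)
    (hw : DifferentiableOn ℂ w (ball (0:ℂ) 1))
    (hwc : ContinuousOn w (closedBall (0:ℂ) 1))
    (hγ : ∀ z₁ z₂ : ℂ, ‖z₁‖ = 1 → ‖z₂‖ = 1 → |γ z₁ - γ z₂| ≤ H * ‖z₁ - z₂‖ ^ β)
    (hbc : ∀ z : ℂ, ‖z‖ = 1 → ((z ^ n)⁻¹ * w z).re = γ z) :
    ∃ c : Fin (2 * n + 1) → ℂ, ∀ z ∈ ball (0:ℂ) 1,
      w z = z ^ n * ((1 / (2 * (Real.pi : ℂ) * Complex.I)) *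
              ∮ t in C(0, 1), (γ t : ℂ) * ((t + z) / (t - z)) / t)
            + ∑ k : Fin (2 * n + 1), c k * z ^ (k : ℕ) := by
  classical
  set P : ℂ := 2 * (Real.pi : ℂ) * Complex.I with hPdef
  have hpi : P ≠ 0 := by
    simp [hPdef, Real.pi_ne_zero, Complex.I_ne_zero, Complex.ofReal_ne_zero]
  set A : ℕ → ℂ := fun m => P⁻¹ * ∮ t in C(0,1), w t * t ^ (-(m:ℤ) - 1) with hA
  set G : ℂ := P⁻¹ * ∮ t in C(0,1), (γ t : ℂ) * t⁻¹ with hGdef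
  have hPconj : (starRingEnd ℂ) P = -P := by
    rw [hPdef]
    simp only [map_mul, Complex.conj_I, map_ofNat, Complex.conj_ofReal]
    ring
  refine ⟨fun k => (if (k:ℕ) < n then A k else 0) + (if (k:ℕ) = n then G else 0)
      + (if n ≤ (k:ℕ) then -((starRingEnd ℂ) (A (2*n - (k:ℕ)))) else 0), fun z hz => ?_⟩
  have hzn : ‖z‖ < 1 := by simpa using hz
  have hwcs : ContinuousOn w (sphere 0 1) := hwc.mono sphere_subset_closedBall
  have hsph : ∀ t : ℂ, t ∈ sphere (0:ℂ) 1 → ‖t‖ = 1 := fun t ht => by simpa using ht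
  have hs0 : ∀ t ∈ sphere (0:ℂ) 1, t ≠ 0 := fun t ht h => by
    have h1 := hsph t ht; rw [h] at h1; simp at h1
  have hsz : ∀ t ∈ sphere (0:ℂ) 1, t - z ≠ 0 := by
    intro t ht h
    have h1 := hsph t ht
    rw [sub_eq_zero] at h
    rw [h] at h1
    linarith
  have hconjw : ContinuousOn (fun t => (starRingEnd ℂ) (w t)) (sphere 0 1) :=
    continuous_star.comp_continuousOn hwcs
  have hγc : ContinuousOn (fun t : ℂ => ((γ t : ℝ) : ℂ)) (sphere 0 1) := by
    have hc2 : ContinuousOn (fun t : ℂ => ((((t^n)⁻¹ * w t).re : ℝ) : ℂ)) (sphere 0 1) :=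
      Complex.continuous_ofReal.comp_continuousOn (Complex.continuous_re.comp_continuousOn
        (((continuousOn_id.pow n).inv₀ fun t ht => pow_ne_zero n (hs0 t ht)).mul hwcs))
    exact hc2.congr fun t ht => by simp only [hbc t (hsph t ht)]
  -- integrability of the five pieces
  have hcf1 : CircleIntegrable (fun t => (t - z)⁻¹ * w t) 0 1 :=
    (((continuousOn_id.sub continuousOn_const).inv₀ hsz).mul hwcs).circleIntegrable zero_le_one
  have hcf2 : CircleIntegrable
      (fun t => ∑ j ∈ Finset.range n, -(z^(n-1-j) * (w t * t^((j:ℤ) - n)))) 0 1 := by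
    refine ContinuousOn.circleIntegrable zero_le_one ?_
    refine continuousOn_finset_sum _ fun j _ => ?_
    exact (continuousOn_const.mul (hwcs.mul
      (continuousOn_id.zpow₀ _ fun t ht => Or.inl (hs0 t ht)))).neg
  have hcf3 : CircleIntegrable
      (fun t => ∑ j ∈ Finset.range n, z^(n+j) * ((starRingEnd ℂ) (w t) * t^(n-1-j))) 0 1 := by
    refine ContinuousOn.circleIntegrable zero_le_one ?_
    refine continuousOn_finset_sum _ fun j _ => ?_
    exact continuousOn_const.mul (hconjw.mul (continuousOn_id.pow _))
  have hcf4 : CircleIntegrable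
      (fun t => z^(2*n) * ((starRingEnd ℂ) (w t) * (t - z)⁻¹)) 0 1 :=
    (continuousOn_const.mul (hconjw.mul
      ((continuousOn_id.sub continuousOn_const).inv₀ hsz))).circleIntegrable zero_le_one
  have hcf5 : CircleIntegrable (fun t => -(z^n * ((γ t : ℂ) * t⁻¹))) 0 1 :=
    ((continuousOn_const.mul (hγc.mul (continuousOn_id.inv₀ hs0))).neg).circleIntegrable
      zero_le_one
  -- values of the integrals
  have hAval : ∀ m : ℕ, (∮ t in C(0,1), w t * t ^ (-(m:ℤ) - 1)) = P * A m := by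
    intro m
    rw [hA, ← mul_assoc, mul_inv_cancel₀ hpi, one_mul]
  have hGval : (∮ t in C(0,1), (γ t : ℂ) * t⁻¹) = P * G := by
    rw [hGdef, ← mul_assoc, mul_inv_cancel₀ hpi, one_mul]
  have hA0 : A 0 = w 0 := by
    have h1 : (∮ t in C(0,1), w t * t ^ (-((0:ℕ):ℤ) - 1)) = ∮ t in C(0,1), (t - 0)⁻¹ * w t := by
      refine circleIntegral.integral_congr zero_le_one fun t ht => ?_
      rw [show (-((0:ℕ):ℤ) - 1) = (-1 : ℤ) by norm_num, zpow_neg_one, sub_zero, mul_comm]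
    rw [show A 0 = P⁻¹ * ∮ t in C(0,1), w t * t ^ (-((0:ℕ):ℤ) - 1) from rfl, h1,
      cauchy' w hw hwc (mem_ball_self one_pos), ← hPdef, ← mul_assoc,
      inv_mul_cancel₀ hpi, one_mul]
  have hI1 : (∮ t in C(0,1), (t - z)⁻¹ * w t) = P * w z := by
    rw [cauchy' w hw hwc hz, hPdef]
  have hconjA : ∀ p : ℕ, (∮ t in C(0,1), (starRingEnd ℂ) (w t) * t ^ p)
      = P * (starRingEnd ℂ) (A (p+1)) := by
    intro p
    rw [conj_pow_integral w p]
    have he : ∀ t : ℂ, w t * t ^ (-(p:ℤ) - 2) = w t * t ^ (-((p+1:ℕ):ℤ) - 1) := by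
      intro t
      congr 2
      omega
    simp only [he]
    rw [hAval (p+1), map_neg, map_mul, hPconj]
    ring
  have hconjC : (∮ t in C(0,1), (starRingEnd ℂ) (w t) * (t - z)⁻¹)
      = P * (starRingEnd ℂ) (A 0) := by
    rw [conj_cauchy w hw hwc hz, hA0, ← hPdef]
  have hI2 : (∮ t in C(0,1), (∑ j ∈ Finset.range n, -(z^(n-1-j) * (w t * t^((j:ℤ) - n)))))
      = P * -(∑ j ∈ Finset.range n, z^(n-1-j) * A (n-1-j)) := by
    rw [rh_circleIntegral_fsum (Finset.range n)
      (fun j t => -(z^(n-1-j) * (w t * t^((j:ℤ) - n))))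
      (fun j _ => (((continuousOn_const.mul (hwcs.mul
        (continuousOn_id.zpow₀ _ fun t ht => Or.inl (hs0 t ht)))).neg).circleIntegrable
        zero_le_one))]
    have hterm : ∀ j ∈ Finset.range n,
        (∮ t in C(0,1), -(z^(n-1-j) * (w t * t^((j:ℤ) - n))))
          = P * -(z^(n-1-j) * A (n-1-j)) := by
      intro j hj
      have hj' := Finset.mem_range.1 hj
      have he : ∀ t : ℂ, -(z^(n-1-j) * (w t * t^((j:ℤ) - n)))
          = (-(z^(n-1-j))) • (w t * t^(-(((n-1-j):ℕ):ℤ) - 1)) := by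
        intro t
        rw [show ((j:ℤ) - n) = (-(((n-1-j):ℕ):ℤ) - 1) by omega, smul_eq_mul]
        ring
      simp only [he]
      rw [circleIntegral.integral_smul, hAval (n-1-j), smul_eq_mul]
      ring
    rw [Finset.sum_congr rfl hterm, ← Finset.mul_sum, Finset.sum_neg_distrib]
  have hI3 : (∮ t in C(0,1),
        (∑ j ∈ Finset.range n, z^(n+j) * ((starRingEnd ℂ) (w t) * t^(n-1-j))))
      = P * (∑ j ∈ Finset.range n, z^(n+j) * (starRingEnd ℂ) (A (n-j))) := by
    rw [rh_circleIntegral_fsum (Finset.range n)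
      (fun j t => z^(n+j) * ((starRingEnd ℂ) (w t) * t^(n-1-j)))
      (fun j _ => ((continuousOn_const.mul (hconjw.mul
        (continuousOn_id.pow _))).circleIntegrable zero_le_one))]
    have hterm : ∀ j ∈ Finset.range n,
        (∮ t in C(0,1), z^(n+j) * ((starRingEnd ℂ) (w t) * t^(n-1-j)))
          = P * (z^(n+j) * (starRingEnd ℂ) (A (n-j))) := by
      intro j hj
      have hj' := Finset.mem_range.1 hj
      have he : ∀ t : ℂ, z^(n+j) * ((starRingEnd ℂ) (w t) * t^(n-1-j))
          = (z^(n+j)) • ((starRingEnd ℂ) (w t) * t^(n-1-j)) := fun t => by rw [smul_eq_mul]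
      simp only [he]
      rw [circleIntegral.integral_smul, hconjA (n-1-j), show n-1-j+1 = n-j by omega,
        smul_eq_mul]
      ring
    rw [Finset.sum_congr rfl hterm, ← Finset.mul_sum]
  have hI4 : (∮ t in C(0,1), z^(2*n) * ((starRingEnd ℂ) (w t) * (t - z)⁻¹))
      = P * (z^(2*n) * (starRingEnd ℂ) (A 0)) := by
    have he : ∀ t : ℂ, z^(2*n) * ((starRingEnd ℂ) (w t) * (t - z)⁻¹)
        = (z^(2*n)) • ((starRingEnd ℂ) (w t) * (t - z)⁻¹) := fun t => by rw [smul_eq_mul]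
    simp only [he]
    rw [circleIntegral.integral_smul, hconjC, smul_eq_mul]
    ring
  have hI5 : (∮ t in C(0,1), -(z^n * ((γ t : ℂ) * t⁻¹))) = P * -(z^n * G) := by
    have he : ∀ t : ℂ, -(z^n * ((γ t : ℂ) * t⁻¹))
        = (-(z^n)) • ((γ t : ℂ) * t⁻¹) := by
      intro t
      rw [smul_eq_mul]
      ring
    simp only [he]
    rw [circleIntegral.integral_smul, hGval, smul_eq_mul]
    ring
  -- pointwise decomposition on the circle
  have hmain : (∮ t in C(0,1), z^n * ((γ t : ℂ) * ((t + z) / (t - z)) / t))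
      = ∮ t in C(0,1), ((t - z)⁻¹ * w t
          + (∑ j ∈ Finset.range n, -(z^(n-1-j) * (w t * t^((j:ℤ) - n))))
          + (∑ j ∈ Finset.range n, z^(n+j) * ((starRingEnd ℂ) (w t) * t^(n-1-j)))
          + z^(2*n) * ((starRingEnd ℂ) (w t) * (t - z)⁻¹)
          + -(z^n * ((γ t : ℂ) * t⁻¹))) := by
    refine circleIntegral.integral_congr zero_le_one fun t ht => ?_
    have htn := hsph t ht
    have hγeq : ((γ t : ℝ) : ℂ) = ((t^n)⁻¹ * w t + (starRingEnd ℂ) ((t^n)⁻¹ * w t)) / 2 := by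
      rw [← hbc t htn, Complex.add_conj]
      push_cast
      ring
    exact pointwise_decomp n z t (w t) (γ t) htn hzn hγeq (conj_sphere htn)
  have htot : (∮ t in C(0,1), z^n * ((γ t : ℂ) * ((t + z) / (t - z)) / t))
      = P * (w z - (∑ j ∈ Finset.range n, z^(n-1-j) * A (n-1-j))
          + (∑ j ∈ Finset.range n, z^(n+j) * (starRingEnd ℂ) (A (n-j)))
          + z^(2*n) * (starRingEnd ℂ) (A 0) - z^n * G) := by
    rw [hmain]
    rw [rh_circleIntegral_add' (f := fun t => (t - z)⁻¹ * w t
        + (∑ j ∈ Finset.range n, -(z^(n-1-j) * (w t * t^((j:ℤ) - n))))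
        + (∑ j ∈ Finset.range n, z^(n+j) * ((starRingEnd ℂ) (w t) * t^(n-1-j)))
        + z^(2*n) * ((starRingEnd ℂ) (w t) * (t - z)⁻¹))
      (g := fun t => -(z^n * ((γ t : ℂ) * t⁻¹)))
      (by exact ((hcf1.add hcf2).add hcf3).add hcf4) hcf5]
    rw [rh_circleIntegral_add' (f := fun t => (t - z)⁻¹ * w t
        + (∑ j ∈ Finset.range n, -(z^(n-1-j) * (w t * t^((j:ℤ) - n))))
        + (∑ j ∈ Finset.range n, z^(n+j) * ((starRingEnd ℂ) (w t) * t^(n-1-j))))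
      (g := fun t => z^(2*n) * ((starRingEnd ℂ) (w t) * (t - z)⁻¹))
      (by exact (hcf1.add hcf2).add hcf3) hcf4]
    rw [rh_circleIntegral_add' (f := fun t => (t - z)⁻¹ * w t
        + (∑ j ∈ Finset.range n, -(z^(n-1-j) * (w t * t^((j:ℤ) - n)))))
      (g := fun t => ∑ j ∈ Finset.range n, z^(n+j) * ((starRingEnd ℂ) (w t) * t^(n-1-j)))
      (by exact hcf1.add hcf2) hcf3]
    rw [rh_circleIntegral_add' (f := fun t => (t - z)⁻¹ * w t)
      (g := fun t => ∑ j ∈ Finset.range n, -(z^(n-1-j) * (w t * t^((j:ℤ) - n))))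
      hcf1 hcf2]
    rw [hI1, hI2, hI3, hI4, hI5]
    ring
  have hsmul : (∮ t in C(0,1), z^n * ((γ t : ℂ) * ((t + z) / (t - z)) / t))
      = z^n * ∮ t in C(0,1), (γ t : ℂ) * ((t + z) / (t - z)) / t := by
    simpa only [smul_eq_mul] using circleIntegral.integral_smul (z^n)
      (fun t => (γ t : ℂ) * ((t + z) / (t - z)) / t) 0 1
  have hfin : z ^ n * ((1 / P) * ∮ t in C(0, 1), (γ t : ℂ) * ((t + z) / (t - z)) / t)
      = w z - (∑ j ∈ Finset.range n, z^(n-1-j) * A (n-1-j))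
        + (∑ j ∈ Finset.range n, z^(n+j) * (starRingEnd ℂ) (A (n-j)))
        + z^(2*n) * (starRingEnd ℂ) (A 0) - z^n * G := by
    have h1 : z ^ n * ((1 / P) * ∮ t in C(0, 1), (γ t : ℂ) * ((t + z) / (t - z)) / t)
        = (1 / P) * ∮ t in C(0,1), z^n * ((γ t : ℂ) * ((t + z) / (t - z)) / t) := by
      rw [hsmul]
      ring
    rw [h1, htot]
    field_simp
  have hcs := sum_c_eq n A (fun m => (starRingEnd ℂ) (A m)) G z
  rw [hfin, hcs]
  ring
end
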